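/- For natural numbers m ≥ 1 and every integer α with 1 ≤ α ≤ m−1, the sum ∑_{j=1}^m γ_{m,j} · j^{2α+1} equals 0, where γ_{m,j} := (-1)^{j-1} · (2/j) · C(2m, m+j) / C(2m, m). Equivalently, for all α ∈ {0,1,...,m−1}, ∑_{j=1}^m γ_{m,j} j^{2α+1} = [α = 0]. -/

import Mathlib

noncomputable def gam (m j : ℕ) : ℝ :=
  (-1) ^ (j - 1) * (2 / j) * (Nat.choose (2 * m) (m + j)) / (Nat.choose (2 * m) m)

open Finset Polynomial fwdDiff

lemma fwdDiff_iter_poly_eq_zero : ∀ (n : ℕ) (p : ℝ[X]), p.natDegree < n →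
    (fwdDiff (1:ℕ))^[n] (fun k : ℕ => p.eval (k : ℝ)) = 0 := by
  intro n
  induction n with
  | zero => intro p hp; exact absurd hp (Nat.not_lt_zero _)
  | succ n IH =>
    intro p hp
    have hΔ : fwdDiff (1:ℕ) (fun k : ℕ => p.eval (k : ℝ))
        = fun k : ℕ => (p.comp (X + C 1) - p).eval (k : ℝ) := by
      ext k
      simp [fwdDiff, eval_comp]
    rw [Function.iterate_succ_apply, hΔ]
    rcases Nat.eq_zero_or_pos p.natDegree with h0 | h0
    · have hc : p = C (p.coeff 0) := Polynomial.eq_C_of_natDegree_eq_zero h0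
      have : (fun k : ℕ => (p.comp (X + C 1) - p).eval (k : ℝ)) = (0 : ℕ → ℝ) := by
        rw [hc]; ext k; simp
      rw [this]
      have hfix : fwdDiff (1:ℕ) (0 : ℕ → ℝ) = 0 := by
        ext k; simp [fwdDiff]
      exact Function.iterate_fixed hfix n
    · set q := p.comp (X + C 1) - p with hq
      have hpne : p ≠ 0 := by
        intro h; rw [h] at h0; simp at h0
      have hX1 : (X + C (1:ℝ)).natDegree = 1 := natDegree_X_add_C 1
      have hlc : (p.comp (X + C 1)).leadingCoeff = p.leadingCoeff := by
        rw [leadingCoeff_comp (by rw [hX1]; exact one_ne_zero),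
          (monic_X_add_C (1:ℝ)).leadingCoeff, one_pow, mul_one]
      have hcne : p.comp (X + C 1) ≠ 0 := by
        intro h
        apply hpne
        apply leadingCoeff_eq_zero.mp
        rw [← hlc, h, leadingCoeff_zero]
      have hdc : (p.comp (X + C 1)).degree = p.degree := by
        rw [degree_eq_natDegree hcne, degree_eq_natDegree hpne, natDegree_comp, hX1, mul_one]
      have hdeg : q.degree < p.degree := by
        rw [hq, ← hdc]
        exact degree_sub_lt hdc hcne hlc
      have hqlt : q.natDegree < n := by
        rcases eq_or_ne q 0 with h | h
        · rw [h]; simpa using lt_of_lt_of_le h0 (Nat.lt_succ_iff.mp hp)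
        · exact lt_of_lt_of_le (natDegree_lt_natDegree h hdeg) (Nat.lt_succ_iff.mp hp)
      exact IH q hqlt

lemma keyB (m α : ℕ) (h : 2 * α < 2 * m) :
    ∑ k ∈ range (2 * m + 1), (-1 : ℝ) ^ k * (Nat.choose (2 * m) k) * ((k : ℝ) - m) ^ (2 * α) = 0 := by
  have h0 := fwdDiff_iter_eq_sum_shift (1 : ℕ)
      (fun k : ℕ => (((X : ℝ[X]) - C (m : ℝ)) ^ (2 * α)).eval (k : ℝ)) (2 * m) 0
  have hz : (fwdDiff (1:ℕ))^[2*m] (fun k : ℕ => (((X : ℝ[X]) - C (m : ℝ)) ^ (2 * α)).eval (k : ℝ)) = 0 := by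
    apply fwdDiff_iter_poly_eq_zero
    rw [natDegree_pow, natDegree_X_sub_C]
    omega
  rw [hz, Pi.zero_apply] at h0
  have h0' : (0 : ℝ) = ∑ k ∈ range (2 * m + 1),
      (-1 : ℝ) ^ (2 * m - k) * (Nat.choose (2 * m) k) * ((k : ℝ) - m) ^ (2 * α) := by
    convert h0 using 2 with k hk
    rw [zsmul_eq_mul]
    push_cast
    simp [mul_assoc]
  have hsign : ∀ k ∈ range (2*m+1), (-1:ℝ)^k * ((2*m).choose k : ℝ) * ((k:ℝ)-m)^(2*α)
      = (-1:ℝ)^(2*m-k) * ((2*m).choose k : ℝ) * ((k:ℝ)-m)^(2*α) := by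
    intro k hk
    have : (-1:ℝ)^(2*m-k) = (-1:ℝ)^k := by
      have h1 : (2*m-k) + k = 2*m := by
        simp only [Finset.mem_range] at hk; omega
      have h2 : (-1:ℝ)^(2*m-k) * (-1)^k = 1 := by
        rw [← pow_add, h1, pow_mul]; norm_num
      have h3 : (-1:ℝ)^k * (-1)^k = 1 := by
        rw [← pow_add, ← two_mul, pow_mul]; norm_num
      calc (-1:ℝ)^(2*m-k) = (-1:ℝ)^(2*m-k) * ((-1)^k * (-1)^k) := by rw [h3, mul_one]
        _ = ((-1:ℝ)^(2*m-k) * (-1)^k) * (-1)^k := by ring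
        _ = (-1)^k := by rw [h2, one_mul]
    rw [this]
  rw [Finset.sum_congr rfl hsign]
  exact h0'.symm


lemma keyC (m α : ℕ) (hm : 1 ≤ m) (hα : 2 * α < 2 * m) :
    2 * ∑ j ∈ Icc 1 m, (-1:ℝ)^j * ((2*m).choose (m+j)) * (j:ℝ)^(2*α)
      + ((2*m).choose m : ℝ) * (0:ℝ)^(2*α) = 0 := by
  set g : ℕ → ℝ := fun k => (-1:ℝ)^k * ((2*m).choose k) * ((k:ℝ)-m)^(2*α) with hg
  have hT : ∑ k ∈ range (2*m+1), g k = 0 := keyB m α hα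
  have hsplit : ∑ k ∈ Finset.Ico 0 m, g k + ∑ k ∈ Finset.Ico m (2*m+1), g k
      = ∑ k ∈ range (2*m+1), g k := by
    rw [Finset.range_eq_Ico]
    exact Finset.sum_Ico_consecutive g (Nat.zero_le m) (by omega)
  have hbot : ∑ k ∈ Finset.Ico m (2*m+1), g k = g m + ∑ k ∈ Finset.Ico (m+1) (2*m+1), g k :=
    Finset.sum_eq_sum_Ico_succ_bot (by omega) g
  have hS2 : ∑ k ∈ Finset.Ico (m+1) (2*m+1), g k = ∑ j ∈ Icc 1 m, g (m + j) := by
    apply Finset.sum_nbij' (fun k => k - m) (fun j => m + j)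
    · intro a ha; simp only [Finset.mem_Ico] at ha; simp only [Finset.mem_Icc]; omega
    · intro a ha; simp only [Finset.mem_Icc] at ha; simp only [Finset.mem_Ico]; omega
    · intro a ha; simp only [Finset.mem_Ico] at ha; omega
    · intro a ha; omega
    · intro a ha; simp only [Finset.mem_Ico] at ha
      congr 1; omega
  have hS1 : ∑ k ∈ Finset.Ico 0 m, g k = ∑ j ∈ Icc 1 m, g (m - j) := by
    apply Finset.sum_nbij' (fun k => m - k) (fun j => m - j)
    · intro a ha; simp only [Finset.mem_Ico] at ha; simp only [Finset.mem_Icc]; omega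
    · intro a ha; simp only [Finset.mem_Icc] at ha; simp only [Finset.mem_Ico]; omega
    · intro a ha; simp only [Finset.mem_Ico] at ha; omega
    · intro a ha; simp only [Finset.mem_Icc] at ha; omega
    · intro a ha; simp only [Finset.mem_Ico] at ha
      congr 1; omega
  have hgg : ∀ j ∈ Icc 1 m, g (m - j) = g (m + j) := by
    intro j hj
    simp only [Finset.mem_Icc] at hj
    have hjm : j ≤ m := hj.2
    have hcast : ((m - j : ℕ) : ℝ) = (m : ℝ) - j := by
      push_cast [Nat.cast_sub hjm]; ring
    have hchoose : (2*m).choose (m - j) = (2*m).choose (m + j) := by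
      have h1 : m - j = 2*m - (m+j) := by omega
      rw [h1, Nat.choose_symm (by omega)]
    have hsign : (-1:ℝ)^(m - j) = (-1:ℝ)^(m + j) := by
      have h1 : m + j = (m - j) + 2*j := by omega
      rw [h1, pow_add, pow_mul, neg_one_sq, one_pow, mul_one]
    have hpow : ((m - j : ℕ) : ℝ) - m = -(j:ℝ) := by rw [hcast]; ring
    have hpow2 : ((m + j : ℕ) : ℝ) - m = (j:ℝ) := by push_cast; ring
    simp only [hg, hchoose, hsign, hpow, hpow2]
    congr 1
    exact Even.neg_pow ⟨α, by ring⟩ _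
  have hmj : ∀ j ∈ Icc 1 m, g (m + j)
      = (-1:ℝ)^m * ((-1:ℝ)^j * ((2*m).choose (m+j)) * (j:ℝ)^(2*α)) := by
    intro j hj
    have hpow2 : ((m + j : ℕ) : ℝ) - m = (j:ℝ) := by push_cast; ring
    simp only [hg, hpow2, pow_add]
    ring
  have hgm : g m = (-1:ℝ)^m * (((2*m).choose m : ℝ) * (0:ℝ)^(2*α)) := by
    simp only [hg, sub_self]
    ring
  rw [← hsplit, hbot, hS1, hS2, Finset.sum_congr rfl hgg,
    Finset.sum_congr rfl hmj, hgm] at hT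
  have hfin : (-1:ℝ)^m * (2 * ∑ j ∈ Icc 1 m, (-1:ℝ)^j * ((2*m).choose (m+j)) * (j:ℝ)^(2*α)
      + ((2*m).choose m : ℝ) * (0:ℝ)^(2*α)) = 0 := by
    rw [← Finset.mul_sum] at hT
    linear_combination hT
  have hne : (-1:ℝ)^m ≠ 0 := pow_ne_zero _ (by norm_num)
  exact (mul_eq_zero.mp hfin).resolve_left hne

theorem stmt1 (m : ℕ) (hm : 1 ≤ m) (α : ℕ) (hα : α ≤ m - 1) :
    ∑ j ∈ Finset.Icc 1 m, gam m j * (j : ℝ) ^ (2 * α + 1) =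
      if α = 0 then 1 else 0 := by
  have h2α : 2 * α < 2 * m := by omega
  have hCm : ((2*m).choose m : ℝ) ≠ 0 := by
    exact_mod_cast (Nat.choose_pos (show m ≤ 2*m by omega)).ne'
  have hterm : ∀ j ∈ Finset.Icc 1 m, gam m j * (j : ℝ) ^ (2 * α + 1)
      = (-((-1:ℝ)^j * ((2*m).choose (m+j)) * (j:ℝ)^(2*α)) * 2) / ((2*m).choose m) := by
    intro j hj
    simp only [Finset.mem_Icc] at hj
    have hj0 : (j : ℝ) ≠ 0 := Nat.cast_ne_zero.mpr (by omega)
    have h1 : ((-1:ℝ))^(j-1) = -(-1:ℝ)^j := by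
      have h2 : j - 1 + 1 = j := by omega
      have h3 : ((-1:ℝ))^j = (-1:ℝ)^(j-1) * (-1) := by rw [← pow_succ, h2]
      rw [h3]; ring
    rw [gam, h1, pow_succ]
    field_simp
  rw [Finset.sum_congr rfl hterm, ← Finset.sum_div]
  have hsum : ∑ j ∈ Finset.Icc 1 m, (-((-1:ℝ)^j * ((2*m).choose (m+j)) * (j:ℝ)^(2*α)) * 2)
      = ((2*m).choose m : ℝ) * (0:ℝ)^(2*α) := by
    have hk := keyC m α hm h2α
    have hfac : ∑ j ∈ Finset.Icc 1 m, (-((-1:ℝ)^j * ((2*m).choose (m+j)) * (j:ℝ)^(2*α)) * 2)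
        = -2 * ∑ j ∈ Finset.Icc 1 m, (-1:ℝ)^j * ((2*m).choose (m+j)) * (j:ℝ)^(2*α) := by
      rw [Finset.mul_sum]
      exact Finset.sum_congr rfl (fun j _ => by ring)
    rw [hfac]
    linarith [hk]
  rw [hsum, mul_comm, mul_div_assoc, div_self hCm, mul_one]
  rcases Nat.eq_zero_or_pos α with h0 | h0
  · simp [h0]
  · rw [if_neg (by omega)]
    exact zero_pow (by omega)
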